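/- (Sphere Packing-like Bound) Let n ≥ 1 and let d be an integer with 1 ≤ d ≤ 2n+1. If C ⊆ Σⁿ is a code with minimum Gau distance at least d, then |C| · Σ_{r=0}^{⌊(d−1)/2⌋} Σ_{i=0}^{⌊r/2⌋} n!/(i!·(r−2i)!·(n−r+i)!) · 9^i · 6^{r−2i} ≤ 16ⁿ. -/

import Mathlib

/-- The DNA pair alphabet Σ = Fin 4 × Fin 4 (A,G,C,T encoded as 0,1,2,3). -/
abbrev Sig := Fin 4 × Fin 4

/-- The Gau distance on Σⁿ:
d_G(x,y) = Σⱼ (δ(xⱼ.1, yⱼ.1) + δ(xⱼ.2, yⱼ.2)), where δ(u,v) = 0 if u = v, else 1. -/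
def dG (n : ℕ) (x y : Fin n → Sig) : ℕ :=
  ∑ j, ((if (x j).1 = (y j).1 then 0 else 1) + (if (x j).2 = (y j).2 then 0 else 1))

namespace GauSP

def cls (s : Sig) : ℕ := (if s.1 = 0 then 0 else 1) + (if s.2 = 0 then 0 else 1)

lemma cls_add_le : ∀ a b : Sig, cls (a + b) ≤ cls a + cls b := by decide
lemma cls_neg : ∀ a : Sig, cls (-a) = cls a := by decide
lemma cls_le_two : ∀ a : Sig, cls a ≤ 2 := by decide

def w {n : ℕ} (z : Fin n → Sig) : ℕ := ∑ j, cls (z j)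

lemma dG_eq {n : ℕ} (x y : Fin n → Sig) : dG n x y = w (x - y) := by
  unfold dG w cls
  refine Finset.sum_congr rfl fun j _ => ?_
  have h1 : (x j).1 = (y j).1 ↔ ((x - y) j).1 = 0 := by
    simp [sub_eq_zero]
  have h2 : (x j).2 = (y j).2 ↔ ((x - y) j).2 = 0 := by
    simp [sub_eq_zero]
  simp only [h1, h2]

lemma w_add_le {n : ℕ} (a b : Fin n → Sig) : w (a + b) ≤ w a + w b := by
  unfold w
  rw [← Finset.sum_add_distrib]
  exact Finset.sum_le_sum fun j _ => cls_add_le _ _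

lemma w_neg {n : ℕ} (a : Fin n → Sig) : w (-a) = w a :=
  Finset.sum_congr rfl fun j _ => cls_neg _

def D (k : ℕ) : Finset Sig := Finset.univ.filter (fun s => cls s = k)

lemma mem_D {k : ℕ} {s : Sig} : s ∈ D k ↔ cls s = k := by simp [D]

lemma card_D2 : (D 2).card = 9 := by decide
lemma card_D1 : (D 1).card = 6 := by decide
lemma card_D0 : (D 0).card = 1 := by decide

def dbl {n : ℕ} (z : Fin n → Sig) : ℕ := (Finset.univ.filter (fun j => cls (z j) = 2)).card
def sgl {n : ℕ} (z : Fin n → Sig) : ℕ := (Finset.univ.filter (fun j => cls (z j) = 1)).card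

lemma w_eq {n : ℕ} (z : Fin n → Sig) : w z = 2 * dbl z + sgl z := by
  unfold w dbl sgl
  rw [Finset.card_filter, Finset.card_filter, Finset.mul_sum, ← Finset.sum_add_distrib]
  refine Finset.sum_congr rfl fun j _ => ?_
  have := cls_le_two (z j)
  interval_cases h : cls (z j) <;> simp

def P {n : ℕ} (A B : Finset (Fin n)) : Finset (Fin n → Sig) :=
  Fintype.piFinset (fun j => if j ∈ A then D 2 else if j ∈ B then D 1 else D 0)

lemma card_P {n : ℕ} (A B : Finset (Fin n)) (hB : B ⊆ Aᶜ) :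
    (P A B).card = 9 ^ A.card * 6 ^ B.card := by
  rw [P, Fintype.card_piFinset]
  have : ∀ j : Fin n, ((if j ∈ A then D 2 else if j ∈ B then D 1 else D 0).card)
      = (if j ∈ A then 9 else if j ∈ B then 6 else 1) := by
    intro j
    split_ifs <;> simp [card_D2, card_D1, card_D0]
  rw [Finset.prod_congr rfl (fun j _ => this j)]
  rw [← Finset.prod_mul_prod_compl A]
  congr 1
  · rw [Finset.prod_congr rfl (fun j hj => if_pos hj), Finset.prod_const]
  · have h1 : ∀ j ∈ Aᶜ, (if j ∈ A then (9:ℕ) else if j ∈ B then 6 else 1)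
        = (if j ∈ B then 6 else 1) := by
      intro j hj
      rw [if_neg (Finset.mem_compl.mp hj)]
    rw [Finset.prod_congr rfl h1, Finset.prod_ite_mem,
      Finset.inter_eq_right.mpr hB, Finset.prod_const]

lemma P_recover {n : ℕ} {A B : Finset (Fin n)} (hB : B ⊆ Aᶜ) {z : Fin n → Sig}
    (hz : z ∈ P A B) :
    (Finset.univ.filter (fun j => cls (z j) = 2)) = A ∧
    (Finset.univ.filter (fun j => cls (z j) = 1)) = B := by
  rw [P, Fintype.mem_piFinset] at hz
  have key : ∀ j : Fin n, (j ∈ A → cls (z j) = 2) ∧ (j ∈ B → cls (z j) = 1) ∧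
      (j ∉ A → j ∉ B → cls (z j) = 0) := by
    intro j
    have h := hz j
    by_cases hA : j ∈ A
    · have hnB : j ∉ B := fun hb => (Finset.mem_compl.mp (hB hb)) hA
      rw [if_pos hA] at h
      exact ⟨fun _ => mem_D.mp h, fun hb => absurd hb hnB, fun ha _ => absurd hA ha⟩
    · rw [if_neg hA] at h
      by_cases hBj : j ∈ B
      · rw [if_pos hBj] at h
        exact ⟨fun ha => absurd ha hA, fun _ => mem_D.mp h, fun _ hb => absurd hBj hb⟩
      · rw [if_neg hBj] at h
        exact ⟨fun ha => absurd ha hA, fun hb => absurd hb hBj, fun _ _ => mem_D.mp h⟩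
  constructor <;> ext j <;> simp only [Finset.mem_filter, Finset.mem_univ, true_and]
  · constructor
    · intro h2
      by_contra hA
      by_cases hBj : j ∈ B
      · rw [(key j).2.1 hBj] at h2; omega
      · rw [(key j).2.2 hA hBj] at h2; omega
    · exact (key j).1
  · constructor
    · intro h1
      by_contra hBj
      by_cases hA : j ∈ A
      · rw [(key j).1 hA] at h1; omega
      · rw [(key j).2.2 hA hBj] at h1; omega
    · exact (key j).2.1

def T (n a b : ℕ) : Finset (Fin n → Sig) :=
  Finset.univ.filter (fun z => dbl z = a ∧ sgl z = b)

def idx (n a b : ℕ) : Finset (Σ _ : Finset (Fin n), Finset (Fin n)) :=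
  (Finset.univ.powersetCard a).sigma (fun A => Aᶜ.powersetCard b)

lemma T_eq (n a b : ℕ) : T n a b = (idx n a b).biUnion (fun p => P p.1 p.2) := by
  ext z
  simp only [T, idx, Finset.mem_filter, Finset.mem_univ, true_and, Finset.mem_biUnion,
    Finset.mem_sigma, Finset.mem_powersetCard]
  constructor
  · rintro ⟨hd, hs⟩
    refine ⟨⟨Finset.univ.filter (fun j => cls (z j) = 2),
      Finset.univ.filter (fun j => cls (z j) = 1)⟩,
      ⟨⟨Finset.subset_univ _, hd⟩, ?_, hs⟩, ?_⟩
    · intro j hj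
      simp only [Finset.mem_filter, Finset.mem_univ, true_and] at hj ⊢
      simp only [Finset.mem_compl, Finset.mem_filter, Finset.mem_univ, true_and]
      omega
    · rw [P, Fintype.mem_piFinset]
      intro j
      by_cases h2 : cls (z j) = 2
      · rw [if_pos (by simp [h2])]; exact mem_D.mpr h2
      · rw [if_neg (by simp [h2])]
        by_cases h1 : cls (z j) = 1
        · rw [if_pos (by simp [h1])]; exact mem_D.mpr h1
        · rw [if_neg (by simp [h1])]
          exact mem_D.mpr (by have := cls_le_two (z j); omega)
  · rintro ⟨⟨A, B⟩, ⟨⟨_, hA⟩, hBsub, hBcard⟩, hz⟩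
    obtain ⟨e2, e1⟩ := P_recover hBsub hz
    unfold dbl sgl
    rw [e2, e1]
    exact ⟨hA, hBcard⟩

lemma card_T (n a b : ℕ) :
    (T n a b).card = Nat.choose n a * Nat.choose (n - a) b * (9 ^ a * 6 ^ b) := by
  rw [T_eq, Finset.card_biUnion]
  · have hconst : ∀ p ∈ idx n a b, (P p.1 p.2).card = 9 ^ a * 6 ^ b := by
      rintro ⟨A, B⟩ hp
      simp only [idx, Finset.mem_sigma, Finset.mem_powersetCard] at hp
      rw [card_P A B hp.2.1, hp.1.2, hp.2.2]
    rw [Finset.sum_congr rfl hconst, Finset.sum_const, smul_eq_mul]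
    congr 1
    unfold idx
    rw [Finset.card_sigma]
    have : ∀ A ∈ (Finset.univ.powersetCard a : Finset (Finset (Fin n))),
        (Aᶜ.powersetCard b).card = Nat.choose (n - a) b := by
      intro A hA
      simp only [Finset.mem_powersetCard] at hA
      rw [Finset.card_powersetCard, Finset.card_compl, hA.2, Fintype.card_fin]
    rw [Finset.sum_congr rfl this, Finset.sum_const, smul_eq_mul,
      Finset.card_powersetCard, Finset.card_univ, Fintype.card_fin]
  · rintro ⟨A, B⟩ hp ⟨A', B'⟩ hq hne
    simp only [idx, Finset.mem_coe, Finset.mem_sigma, Finset.mem_powersetCard] at hp hq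
    rw [Function.onFun, Finset.disjoint_left]
    intro z hz hz'
    obtain ⟨e2, e1⟩ := P_recover hp.2.1 hz
    obtain ⟨e2', e1'⟩ := P_recover hq.2.1 hz'
    exact hne (by simp only [← e2, ← e1, ← e2', ← e1'])

lemma fact_div (n r i : ℕ) (hr : r ≤ n) (hi : 2 * i ≤ r) :
    n.factorial / (i.factorial * (r - 2 * i).factorial * (n + i - r).factorial)
      = Nat.choose n i * Nat.choose (n - i) (r - 2 * i) := by
  have hin : i ≤ n := by omega
  have hb : r - 2 * i ≤ n - i := by omega
  have h1 := Nat.choose_mul_factorial_mul_factorial hin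
  have h2 := Nat.choose_mul_factorial_mul_factorial hb
  have he : n - i - (r - 2 * i) = n + i - r := by omega
  rw [he] at h2
  have key : n.factorial = Nat.choose n i * Nat.choose (n - i) (r - 2 * i) *
      (i.factorial * (r - 2 * i).factorial * (n + i - r).factorial) := by
    rw [← h1, ← h2]; ring
  rw [key, Nat.mul_div_cancel]
  positivity
end GauSP

/-- Sphere Packing-like bound: if C ⊆ Σⁿ has minimum Gau distance ≥ d then
|C| · Σ_{r=0}^{⌊(d−1)/2⌋} Σ_{i=0}^{⌊r/2⌋} n!/(i!·(r−2i)!·(n−r+i)!)·9^i·6^{r−2i} ≤ 16ⁿ. -/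
theorem gau_sphere_packing_bound (n d : ℕ) (hn : 1 ≤ n) (hd1 : 1 ≤ d) (hd2 : d ≤ 2 * n + 1)
    (C : Finset (Fin n → Sig))
    (hC : ∀ x ∈ C, ∀ y ∈ C, x ≠ y → d ≤ dG n x y) :
    C.card *
        ∑ r ∈ Finset.Icc 0 ((d - 1) / 2), ∑ i ∈ Finset.Icc 0 (r / 2),
          n.factorial / (i.factorial * (r - 2 * i).factorial * (n + i - r).factorial) *
            9 ^ i * 6 ^ (r - 2 * i) ≤
      16 ^ n := by
  classical
  set t := (d - 1) / 2 with ht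
  have htn : t ≤ n := by omega
  set B₀ : Finset (Fin n → Sig) := Finset.univ.filter (fun z => GauSP.w z ≤ t) with hB₀
  have hsum : (∑ r ∈ Finset.Icc 0 t, ∑ i ∈ Finset.Icc 0 (r / 2),
      n.factorial / (i.factorial * (r - 2 * i).factorial * (n + i - r).factorial)
        * 9 ^ i * 6 ^ (r - 2 * i))
      = ∑ r ∈ Finset.Icc 0 t, ∑ i ∈ Finset.Icc 0 (r / 2), (GauSP.T n i (r - 2 * i)).card := by
    refine Finset.sum_congr rfl fun r hr => Finset.sum_congr rfl fun i hi => ?_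
    rw [Finset.mem_Icc] at hr hi
    have hrn : r ≤ n := le_trans hr.2 htn
    have h2i : 2 * i ≤ r := by omega
    rw [GauSP.fact_div n r i hrn h2i, GauSP.card_T]
    ring
  have hball : (∑ r ∈ Finset.Icc 0 t, ∑ i ∈ Finset.Icc 0 (r / 2),
      (GauSP.T n i (r - 2 * i)).card) ≤ B₀.card := by
    rw [Finset.sum_sigma']
    set J := (Finset.Icc 0 t).sigma (fun r => Finset.Icc 0 (r / 2)) with hJ
    have hdisj : ∀ p ∈ J, ∀ q ∈ J, p ≠ q →
        Disjoint (GauSP.T n p.2 (p.1 - 2 * p.2)) (GauSP.T n q.2 (q.1 - 2 * q.2)) := by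
      rintro ⟨r, i⟩ hp ⟨r', i'⟩ hq hne
      simp only [hJ, Finset.mem_sigma, Finset.mem_Icc] at hp hq
      rw [Finset.disjoint_left]
      intro z hz hz'
      simp only [GauSP.T, Finset.mem_filter] at hz hz'
      have hi : i = i' := by omega
      have hr : r = r' := by omega
      exact hne (by rw [hr, hi])
    have hcard := Finset.card_biUnion hdisj
    rw [← hcard]
    apply Finset.card_le_card
    intro z hz
    rw [Finset.mem_biUnion] at hz
    obtain ⟨⟨r, i⟩, hp, hzT⟩ := hz
    simp only [hJ, Finset.mem_sigma, Finset.mem_Icc] at hp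
    simp only [GauSP.T, Finset.mem_filter] at hzT
    rw [hB₀, Finset.mem_filter]
    refine ⟨Finset.mem_univ _, ?_⟩
    rw [GauSP.w_eq]
    omega
  have hpack : C.card * B₀.card ≤ 16 ^ n := by
    have hinj : Set.InjOn (fun p : (Fin n → Sig) × (Fin n → Sig) => p.1 + p.2)
        ↑(C ×ˢ B₀) := by
      rintro ⟨x1, z1⟩ h1 ⟨x2, z2⟩ h2 heq
      simp only [Finset.coe_product, Set.mem_prod, Finset.mem_coe] at h1 h2
      simp only at heq
      have hx : x1 = x2 := by
        by_contra hne
        have hd : d ≤ dG n x1 x2 := hC x1 h1.1 x2 h2.1 hne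
        have hxz : x1 - x2 = z2 - z1 :=
          sub_eq_sub_iff_add_eq_add.mpr (by rw [heq, add_comm])
        have hle : dG n x1 x2 ≤ GauSP.w z2 + GauSP.w z1 := by
          rw [GauSP.dG_eq, hxz, sub_eq_add_neg]
          calc GauSP.w (z2 + -z1) ≤ GauSP.w z2 + GauSP.w (-z1) := GauSP.w_add_le _ _
            _ = GauSP.w z2 + GauSP.w z1 := by rw [GauSP.w_neg]
        have hz1 : GauSP.w z1 ≤ t := (Finset.mem_filter.mp h1.2).2
        have hz2 : GauSP.w z2 ≤ t := (Finset.mem_filter.mp h2.2).2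
        omega
      subst hx
      have hz : z1 = z2 := add_left_cancel heq
      rw [hz]
    calc C.card * B₀.card = (C ×ˢ B₀).card := (Finset.card_product _ _).symm
      _ = ((C ×ˢ B₀).image (fun p => p.1 + p.2)).card :=
          (Finset.card_image_of_injOn hinj).symm
      _ ≤ (Finset.univ : Finset (Fin n → Sig)).card := Finset.card_le_univ _
      _ = 16 ^ n := by simp
  calc C.card * _ ≤ C.card * B₀.card := by
        rw [hsum]; exact Nat.mul_le_mul_left _ hball
    _ ≤ 16 ^ n := hpack
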